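/- Under the hypotheses of the preceding construction, if additionally h₁(x) = O(x^{κ+1}) and h₂(x) = O(x^{κ+1}) as x → 0, f(x) ∼ x^κ and g(x) ∼ -p₁(0)/(2κ+1) x^{κ+1} with p₁(0) ≠ 0, then the solution (u,v) of the non-homogeneous system given by the integral formulas satisfies u(x) = O(x f(x)) and v(x) = O(x g(x)) as x → 0, and it is the unique solution with these asymptotics. -/

import Mathlib

open Set Filter Topology intervalIntegral MeasureTheory Asymptotics

private lemma vanish_aux {F : ℝ → ℂ} {a : ℝ}
    (hd : ∀ x ∈ Set.Ioo (0:ℝ) a, HasDerivAt F 0 x)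
    (hc : ContinuousOn F (Set.Ioc 0 a))
    (h0 : Tendsto F (𝓝[>] (0:ℝ)) (𝓝 0)) :
    ∀ x ∈ Set.Ioc (0:ℝ) a, F x = 0 := by
  intro x hx
  have key : ∀ t ∈ Set.Ioc (0:ℝ) x, F x = F t := by
    intro t ht
    have hsub : Set.Icc t x ⊆ Set.Ioc 0 a := fun y hy =>
      ⟨lt_of_lt_of_le ht.1 hy.1, le_trans hy.2 hx.2⟩
    have hcst := constant_of_has_deriv_right_zero (f := F) (a := t) (b := x)
      (hc.mono hsub)
      (fun y hy => ((hd y ⟨lt_of_lt_of_le ht.1 hy.1, lt_of_lt_of_le hy.2 hx.2⟩).hasDerivWithinAt))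
    exact hcst x (Set.right_mem_Icc.2 ht.2)
  have hev : F =ᶠ[𝓝[>] (0:ℝ)] fun _ => F x := by
    filter_upwards [Ioc_mem_nhdsGT_of_mem (⟨le_refl (0:ℝ), hx.1⟩ : (0:ℝ) ∈ Set.Ico (0:ℝ) x)]
      with t ht
    exact (key t ht).symm
  have hT : Tendsto F (𝓝[>] (0:ℝ)) (𝓝 (F x)) := by
    rw [tendsto_congr' hev]; exact tendsto_const_nhds
  exact tendsto_nhds_unique hT h0

private lemma bigO_extract {α E F : Type*} [NormedAddCommGroup E] [NormedAddCommGroup F]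
    {l : Filter α} {h : α → E} {w : α → F} (hO : h =O[l] w) :
    ∃ C ≥ (0:ℝ), ∀ᶠ x in l, ‖h x‖ ≤ C * ‖w x‖ := by
  obtain ⟨C, hC⟩ := hO.bound
  refine ⟨max C 0, le_max_right _ _, ?_⟩
  filter_upwards [hC] with x hx
  calc ‖h x‖ ≤ C * ‖w x‖ := hx
  _ ≤ max C 0 * ‖w x‖ := by gcongr; exact le_max_left _ _

set_option maxHeartbeats 2000000 in
theorem nonhomogeneous_asymptotics_unique (a κ : ℝ) (ha : 0 < a) (hκ : 1 / 2 ≤ κ)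
    (p₁ p₂ q f g f' g' h₁ h₂ z u v : ℝ → ℂ)
    (hp₁ : ContinuousOn p₁ (Set.Icc 0 a))
    (hp₂ : ContinuousOn p₂ (Set.Icc 0 a))
    (hq : ContinuousOn q (Set.Icc 0 a))
    (hp₁0 : p₁ 0 ≠ 0)
    (hh₁ : ContinuousOn h₁ (Set.Icc 0 a))
    (hh₂ : ContinuousOn h₂ (Set.Icc 0 a))
    (hh₁O : h₁ =O[𝓝[>] (0:ℝ)] fun x => (x ^ (κ + 1) : ℝ))
    (hh₂O : h₂ =O[𝓝[>] (0:ℝ)] fun x => (x ^ (κ + 1) : ℝ))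
    (hfne : ∀ x ∈ Set.Ioc (0:ℝ) a, f x ≠ 0)
    (hf : ∀ x ∈ Set.Ioc (0:ℝ) a, HasDerivAt f (f' x) x)
    (hg : ∀ x ∈ Set.Ioc (0:ℝ) a, HasDerivAt g (g' x) x)
    (hsys1 : ∀ x ∈ Set.Ioc (0:ℝ) a,
      g' x + p₁ x * f x + (((κ / x : ℝ) : ℂ) + q x) * g x = 0)
    (hsys2 : ∀ x ∈ Set.Ioc (0:ℝ) a,
      -f' x + (((κ / x : ℝ) : ℂ) + q x) * f x + p₂ x * g x = 0)
    (hfasym : Tendsto (fun x => f x / ((x ^ κ : ℝ) : ℂ)) (𝓝[>] (0:ℝ)) (𝓝 1))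
    (hgasym : Tendsto (fun x => g x / ((x ^ (κ + 1) : ℝ) : ℂ)) (𝓝[>] (0:ℝ))
      (𝓝 (-p₁ 0 / (2 * κ + 1))))
    (hz : ∀ x ∈ Set.Ioc (0:ℝ) a,
      z x = ∫ t in (0:ℝ)..x, (h₁ t * f t + h₂ t * g t))
    (hu : ∀ x ∈ Set.Ioc (0:ℝ) a,
      u x = f x * ∫ t in (0:ℝ)..x, (-(h₂ t / f t) + p₂ t / f t ^ 2 * z t))
    (hv : ∀ x ∈ Set.Ioc (0:ℝ) a,
      v x = 1 / f x * (g x * u x + z x))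
    (hint1 : ∀ x ∈ Set.Ioc (0:ℝ) a,
      IntervalIntegrable (fun t => h₁ t * f t + h₂ t * g t) volume 0 x)
    (hint2 : ∀ x ∈ Set.Ioc (0:ℝ) a,
      IntervalIntegrable (fun t => -(h₂ t / f t) + p₂ t / f t ^ 2 * z t) volume 0 x) :
    (u =O[𝓝[>] (0:ℝ)] fun x => x * f x) ∧
    (v =O[𝓝[>] (0:ℝ)] fun x => x * g x) ∧
    (∀ u₁ v₁ u₁' v₁' : ℝ → ℂ,
      (∀ x ∈ Set.Ioc (0:ℝ) a, HasDerivAt u₁ (u₁' x) x) →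
      (∀ x ∈ Set.Ioc (0:ℝ) a, HasDerivAt v₁ (v₁' x) x) →
      (∀ x ∈ Set.Ioc (0:ℝ) a,
        v₁' x + p₁ x * u₁ x + (((κ / x : ℝ) : ℂ) + q x) * v₁ x = h₁ x) →
      (∀ x ∈ Set.Ioc (0:ℝ) a,
        -u₁' x + (((κ / x : ℝ) : ℂ) + q x) * u₁ x + p₂ x * v₁ x = h₂ x) →
      (u₁ =O[𝓝[>] (0:ℝ)] fun x => x * f x) →
      (v₁ =O[𝓝[>] (0:ℝ)] fun x => x * g x) →
      ∀ x ∈ Set.Ioc (0:ℝ) a, u₁ x = u x ∧ v₁ x = v x) := by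
  ------------------------------------------------------------------
  -- Part 0 : constants and eventual bounds
  ------------------------------------------------------------------
  have h2κ : (0:ℝ) < 2 * κ + 1 := by linarith
  set L : ℂ := -p₁ 0 / (2 * ↑κ + 1) with hLdef
  have hLne : L ≠ 0 := by
    apply div_ne_zero (neg_ne_zero.2 hp₁0)
    have h : ((2*κ+1 : ℝ) : ℂ) ≠ 0 := by exact_mod_cast ne_of_gt h2κ
    push_cast at h
    convert h using 1
  have hLpos : 0 < ‖L‖ := norm_pos_iff.2 hLne
  set LN : ℝ := ‖L‖ with hLNdef
  obtain ⟨C1, hC1nn, hC1'⟩ := bigO_extract hh₁O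
  obtain ⟨C2, hC2nn, hC2'⟩ := bigO_extract hh₂O
  have hC1 : ∀ᶠ x in 𝓝[>] (0:ℝ), ‖h₁ x‖ ≤ C1 * x ^ (κ+1) := by
    filter_upwards [hC1', self_mem_nhdsWithin] with x hx hx0
    rwa [Real.norm_of_nonneg (Real.rpow_nonneg (le_of_lt hx0) _)] at hx
  have hC2 : ∀ᶠ x in 𝓝[>] (0:ℝ), ‖h₂ x‖ ≤ C2 * x ^ (κ+1) := by
    filter_upwards [hC2', self_mem_nhdsWithin] with x hx hx0
    rwa [Real.norm_of_nonneg (Real.rpow_nonneg (le_of_lt hx0) _)] at hx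
  have hfbd : ∀ᶠ x in 𝓝[>] (0:ℝ), ‖f x‖ ≤ 2 * x ^ κ ∧ x ^ κ ≤ 2 * ‖f x‖ := by
    have h1 := hfasym.eventually (Metric.ball_mem_nhds (1:ℂ) (by norm_num : (0:ℝ) < 1/2))
    filter_upwards [h1, self_mem_nhdsWithin] with x hx hx0
    have hxκ : (0:ℝ) < x ^ κ := Real.rpow_pos_of_pos hx0 κ
    have hfx : ‖f x‖ = ‖f x / ((x^κ:ℝ):ℂ)‖ * x ^ κ := by
      rw [norm_div, Complex.norm_real, Real.norm_of_nonneg hxκ.le,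
        div_mul_cancel₀ _ (ne_of_gt hxκ)]
    have hb : ‖f x / ((x^κ:ℝ):ℂ) - 1‖ < 1/2 := by
      simpa [dist_eq_norm] using hx
    have e1 := norm_sub_norm_le (f x / ((x^κ:ℝ):ℂ)) 1
    have e2 := norm_sub_norm_le (1:ℂ) (f x / ((x^κ:ℝ):ℂ))
    rw [norm_sub_rev] at e2
    simp only [norm_one] at e1 e2
    constructor
    · rw [hfx]; nlinarith
    · rw [hfx]; nlinarith
  have hgbd : ∀ᶠ x in 𝓝[>] (0:ℝ),
      ‖g x‖ ≤ 2 * LN * x ^ (κ+1) ∧ LN/2 * x ^ (κ+1) ≤ ‖g x‖ := by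
    have h1 := hgasym.eventually (Metric.ball_mem_nhds L (by positivity : (0:ℝ) < ‖L‖/2))
    filter_upwards [h1, self_mem_nhdsWithin] with x hx hx0
    have hxκ : (0:ℝ) < x ^ (κ+1) := Real.rpow_pos_of_pos hx0 _
    have hfx : ‖g x‖ = ‖g x / ((x^(κ+1):ℝ):ℂ)‖ * x ^ (κ+1) := by
      rw [norm_div, Complex.norm_real, Real.norm_of_nonneg hxκ.le,
        div_mul_cancel₀ _ (ne_of_gt hxκ)]
    have hb : ‖g x / ((x^(κ+1):ℝ):ℂ) - L‖ < ‖L‖/2 := by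
      simpa [dist_eq_norm] using hx
    have e1 := norm_sub_norm_le (g x / ((x^(κ+1):ℝ):ℂ)) L
    have e2 := norm_sub_norm_le L (g x / ((x^(κ+1):ℝ):ℂ))
    rw [norm_sub_rev] at e2
    constructor
    · rw [hfx]; nlinarith
    · rw [hfx]; nlinarith
  obtain ⟨M, hM⟩ : ∃ M, ∀ x ∈ Set.Icc (0:ℝ) a, ‖p₂ x‖ ≤ M :=
    isCompact_Icc.exists_bound_of_continuousOn hp₂
  have hMnn : 0 ≤ M := le_trans (norm_nonneg _) (hM 0 ⟨le_refl 0, ha.le⟩)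
  -- extract δ
  have hall : ∀ᶠ x in 𝓝[>] (0:ℝ), (x ≤ a ∧ x ≤ 1) ∧
      (‖h₁ x‖ ≤ C1 * x ^ (κ+1) ∧ ‖h₂ x‖ ≤ C2 * x ^ (κ+1) ∧
      (‖f x‖ ≤ 2 * x ^ κ ∧ x ^ κ ≤ 2 * ‖f x‖) ∧
      (‖g x‖ ≤ 2 * LN * x ^ (κ+1) ∧ LN/2 * x ^ (κ+1) ≤ ‖g x‖)) := by
    have hsm : Set.Ioc (0:ℝ) (min a 1) ∈ 𝓝[>] (0:ℝ) :=
      Ioc_mem_nhdsGT_of_mem ⟨le_refl (0:ℝ), lt_min ha one_pos⟩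
    filter_upwards [hC1, hC2, hfbd, hgbd, hsm] with x e1 e2 e3 e4 e5
    exact ⟨⟨le_trans e5.2 (min_le_left _ _), le_trans e5.2 (min_le_right _ _)⟩, e1, e2, e3, e4⟩
  obtain ⟨δ, hδmem, hδsub⟩ := mem_nhdsGT_iff_exists_Ioc_subset.1 hall
  have hδ0 : (0:ℝ) < δ := hδmem
  have hδa : δ ≤ a := (hδsub ⟨hδ0, le_refl δ⟩).1.1
  have hδ1 : δ ≤ 1 := (hδsub ⟨hδ0, le_refl δ⟩).1.2
  have good : ∀ x ∈ Set.Ioc (0:ℝ) δ,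
      ‖h₁ x‖ ≤ C1 * x ^ (κ+1) ∧ ‖h₂ x‖ ≤ C2 * x ^ (κ+1) ∧
      (‖f x‖ ≤ 2 * x ^ κ ∧ x ^ κ ≤ 2 * ‖f x‖) ∧
      (‖g x‖ ≤ 2 * LN * x ^ (κ+1) ∧ LN/2 * x ^ (κ+1) ≤ ‖g x‖) :=
    fun x hx => (hδsub hx).2
  ------------------------------------------------------------------
  -- Part 1 : bound on z
  ------------------------------------------------------------------
  set Kz : ℝ := 2*C1 + 2*C2*LN with hKz
  have hKznn : 0 ≤ Kz := by rw [hKz]; positivity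
  have hzb : ∀ x ∈ Set.Ioc (0:ℝ) δ, ‖z x‖ ≤ Kz * x ^ (2*κ+2) := by
    intro x hx
    have hxa : x ∈ Set.Ioc (0:ℝ) a := ⟨hx.1, le_trans hx.2 hδa⟩
    rw [hz x hxa]
    have hb : ∀ t ∈ Set.uIoc (0:ℝ) x, ‖h₁ t * f t + h₂ t * g t‖ ≤ Kz * x ^ (2*κ+1) := by
      intro t ht
      rw [Set.uIoc_of_le hx.1.le] at ht
      have htδ : t ∈ Set.Ioc (0:ℝ) δ := ⟨ht.1, le_trans ht.2 hx.2⟩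
      obtain ⟨b1, b2, ⟨bf1, bf2⟩, bg1, bg2⟩ := good t htδ
      have htp : (0:ℝ) < t := ht.1
      have ht1 : t ≤ 1 := le_trans ht.2 (le_trans hx.2 hδ1)
      have e1 : ‖h₁ t * f t‖ ≤ 2*C1 * t ^ (2*κ+1) := by
        rw [norm_mul]
        calc ‖h₁ t‖ * ‖f t‖ ≤ (C1 * t^(κ+1)) * (2 * t^κ) := by
              apply mul_le_mul b1 bf1 (norm_nonneg _) (by positivity)
        _ = 2*C1 * (t^(κ+1) * t^κ) := by ring
        _ = 2*C1 * t ^ (2*κ+1) := by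
              rw [← Real.rpow_add htp]; congr 1; ring
      have e2 : ‖h₂ t * g t‖ ≤ 2*C2*LN * t ^ (2*κ+1) := by
        rw [norm_mul]
        calc ‖h₂ t‖ * ‖g t‖ ≤ (C2 * t^(κ+1)) * (2 * LN * t^(κ+1)) := by
              apply mul_le_mul b2 bg1 (norm_nonneg _) (by positivity)
        _ = 2*C2*LN * (t^(κ+1) * t^(κ+1)) := by ring
        _ = 2*C2*LN * t ^ ((κ+1)+(κ+1)) := by rw [← Real.rpow_add htp]
        _ ≤ 2*C2*LN * t ^ (2*κ+1) := by
              apply mul_le_mul_of_nonneg_left _ (by positivity)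
              apply Real.rpow_le_rpow_of_exponent_ge htp ht1 (by linarith)
      have e3 : t ^ (2*κ+1) ≤ x ^ (2*κ+1) :=
        Real.rpow_le_rpow htp.le ht.2 (by linarith)
      calc ‖h₁ t * f t + h₂ t * g t‖ ≤ ‖h₁ t * f t‖ + ‖h₂ t * g t‖ := norm_add_le _ _
      _ ≤ 2*C1 * t ^ (2*κ+1) + 2*C2*LN * t ^ (2*κ+1) := add_le_add e1 e2
      _ = Kz * t ^ (2*κ+1) := by rw [hKz]; ring
      _ ≤ Kz * x ^ (2*κ+1) := by exact mul_le_mul_of_nonneg_left e3 hKznn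
    calc ‖∫ t in (0:ℝ)..x, (h₁ t * f t + h₂ t * g t)‖ ≤ Kz * x ^ (2*κ+1) * |x - 0| :=
          intervalIntegral.norm_integral_le_of_norm_le_const hb
    _ = Kz * x ^ (2*κ+2) := by
        rw [sub_zero, abs_of_pos hx.1, mul_assoc, ← Real.rpow_add_one (ne_of_gt hx.1)]
        congr 1
        ring
  ------------------------------------------------------------------
  -- Part 2 : bounds on the integrand w, its primitive, and u, v
  ------------------------------------------------------------------
  set Kw : ℝ := 2*C2 + 4*M*Kz with hKw
  have hKwnn : 0 ≤ Kw := by rw [hKw]; positivity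
  have hwb : ∀ t ∈ Set.Ioc (0:ℝ) δ,
      ‖-(h₂ t / f t) + p₂ t / f t ^ 2 * z t‖ ≤ Kw * t := by
    intro t ht
    obtain ⟨b1, b2, ⟨bf1, bf2⟩, bg1, bg2⟩ := good t ht
    have htp : (0:ℝ) < t := ht.1
    have ht1 : t ≤ 1 := le_trans ht.2 hδ1
    have hta : t ∈ Set.Ioc (0:ℝ) a := ⟨htp, le_trans ht.2 hδa⟩
    have hfpos : (0:ℝ) < ‖f t‖ := norm_pos_iff.2 (hfne t hta)
    have hFne : ‖f t‖ ≠ 0 := ne_of_gt hfpos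
    have e1 : ‖h₂ t / f t‖ ≤ 2 * C2 * t := by
      rw [norm_div, div_le_iff₀ hfpos]
      calc ‖h₂ t‖ ≤ C2 * t ^ (κ+1) := b2
      _ = C2 * (t ^ κ * t) := by rw [Real.rpow_add_one (ne_of_gt htp)]
      _ ≤ C2 * (2 * ‖f t‖ * t) := by
          apply mul_le_mul_of_nonneg_left _ hC2nn
          exact mul_le_mul_of_nonneg_right bf2 htp.le
      _ = 2 * C2 * t * ‖f t‖ := by ring
    have hzt : ‖z t‖ ≤ Kz * (4 * (t * t) * (‖f t‖ * ‖f t‖)) := by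
      calc ‖z t‖ ≤ Kz * t ^ (2*κ+2) := hzb t ht
      _ = Kz * ((t ^ κ * t) * (t ^ κ * t)) := by
          rw [show (2*κ+2 : ℝ) = (κ+1)+(κ+1) by ring, Real.rpow_add htp,
            Real.rpow_add_one (ne_of_gt htp)]
      _ ≤ Kz * ((2 * ‖f t‖ * t) * (2 * ‖f t‖ * t)) := by
          apply mul_le_mul_of_nonneg_left _ hKznn
          apply mul_le_mul _ _ (by positivity) (by positivity)
          · exact mul_le_mul_of_nonneg_right bf2 htp.le
          · exact mul_le_mul_of_nonneg_right bf2 htp.le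
      _ = Kz * (4 * (t * t) * (‖f t‖ * ‖f t‖)) := by ring
    have e2 : ‖p₂ t / f t ^ 2 * z t‖ ≤ 4 * M * Kz * t := by
      rw [norm_mul, norm_div, norm_pow, sq]
      calc ‖p₂ t‖ / (‖f t‖ * ‖f t‖) * ‖z t‖
          ≤ M / (‖f t‖ * ‖f t‖) * (Kz * (4 * (t * t) * (‖f t‖ * ‖f t‖))) := by
            gcongr
            exact hM t ⟨htp.le, hta.2⟩
      _ = 4 * M * Kz * (t * t) := by
            have hgen : ∀ F : ℝ, F ≠ 0 →
                M / (F * F) * (Kz * (4 * (t * t) * (F * F))) = 4 * M * Kz * (t * t) := by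
              intro F hF; field_simp
            exact hgen _ hFne
      _ ≤ 4 * M * Kz * t := by
            nlinarith [mul_nonneg (mul_nonneg hMnn hKznn)
              (mul_nonneg htp.le (sub_nonneg.2 ht1))]
    calc ‖-(h₂ t / f t) + p₂ t / f t ^ 2 * z t‖
        ≤ ‖-(h₂ t / f t)‖ + ‖p₂ t / f t ^ 2 * z t‖ := norm_add_le _ _
    _ = ‖h₂ t / f t‖ + ‖p₂ t / f t ^ 2 * z t‖ := by rw [norm_neg]
    _ ≤ 2 * C2 * t + 4 * M * Kz * t := add_le_add e1 e2
    _ = Kw * t := by rw [hKw]; ring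
  have hIb : ∀ x ∈ Set.Ioc (0:ℝ) δ,
      ‖∫ t in (0:ℝ)..x, (-(h₂ t / f t) + p₂ t / f t ^ 2 * z t)‖ ≤ Kw * x * x := by
    intro x hx
    have hb : ∀ t ∈ Set.uIoc (0:ℝ) x,
        ‖-(h₂ t / f t) + p₂ t / f t ^ 2 * z t‖ ≤ Kw * x := by
      intro t ht
      rw [Set.uIoc_of_le hx.1.le] at ht
      calc ‖-(h₂ t / f t) + p₂ t / f t ^ 2 * z t‖ ≤ Kw * t :=
            hwb t ⟨ht.1, le_trans ht.2 hx.2⟩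
      _ ≤ Kw * x := mul_le_mul_of_nonneg_left ht.2 hKwnn
    calc ‖∫ t in (0:ℝ)..x, (-(h₂ t / f t) + p₂ t / f t ^ 2 * z t)‖ ≤ Kw * x * |x - 0| :=
          intervalIntegral.norm_integral_le_of_norm_le_const hb
    _ = Kw * x * x := by rw [sub_zero, abs_of_pos hx.1]
  have hub : ∀ x ∈ Set.Ioc (0:ℝ) δ, ‖u x‖ ≤ Kw * x * (x * ‖f x‖) := by
    intro x hx
    have hxa : x ∈ Set.Ioc (0:ℝ) a := ⟨hx.1, le_trans hx.2 hδa⟩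
    rw [hu x hxa, norm_mul]
    calc ‖f x‖ * ‖∫ t in (0:ℝ)..x, (-(h₂ t / f t) + p₂ t / f t ^ 2 * z t)‖
        ≤ ‖f x‖ * (Kw * x * x) :=
          mul_le_mul_of_nonneg_left (hIb x hx) (norm_nonneg _)
    _ = Kw * x * (x * ‖f x‖) := by ring
  have huO : u =O[𝓝[>] (0:ℝ)] fun x => (x : ℂ) * f x := by
    apply IsBigO.of_bound Kw
    filter_upwards [Ioc_mem_nhdsGT_of_mem (⟨le_refl (0:ℝ), hδ0⟩ : (0:ℝ) ∈ Set.Ico (0:ℝ) δ)]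
      with x hx
    have hx1 : x ≤ 1 := le_trans hx.2 hδ1
    calc ‖u x‖ ≤ Kw * x * (x * ‖f x‖) := hub x hx
    _ ≤ Kw * 1 * (x * ‖f x‖) := by
        apply mul_le_mul_of_nonneg_right _ (mul_nonneg hx.1.le (norm_nonneg _))
        exact mul_le_mul_of_nonneg_left hx1 hKwnn
    _ = Kw * ‖(x : ℂ) * f x‖ := by
        rw [norm_mul, Complex.norm_real, Real.norm_of_nonneg hx.1.le]; ring
  have hvO : v =O[𝓝[>] (0:ℝ)] fun x => (x : ℂ) * g x := by
    apply IsBigO.of_bound ((4*LN*Kw + 2*Kz) * 2 / LN)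
    filter_upwards [Ioc_mem_nhdsGT_of_mem (⟨le_refl (0:ℝ), hδ0⟩ : (0:ℝ) ∈ Set.Ico (0:ℝ) δ)]
      with x hx
    have hxa : x ∈ Set.Ioc (0:ℝ) a := ⟨hx.1, le_trans hx.2 hδa⟩
    have hx1 : x ≤ 1 := le_trans hx.2 hδ1
    obtain ⟨b1, b2, ⟨bf1, bf2⟩, bg1, bg2⟩ := good x hx
    have hfpos : (0:ℝ) < ‖f x‖ := norm_pos_iff.2 (hfne x hxa)
    have hκx : (0:ℝ) < x ^ (κ+1) := Real.rpow_pos_of_pos hx.1 _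
    have hκx2 : (0:ℝ) < x ^ (κ+2) := Real.rpow_pos_of_pos hx.1 _
    have hxk2 : x ^ (κ+2:ℝ) = x ^ (κ+1:ℝ) * x := by
      rw [show (κ+2:ℝ) = (κ+1)+1 by ring]
      exact Real.rpow_add_one (ne_of_gt hx.1) _
    have hnum : ‖g x * u x + z x‖ ≤ (4*LN*Kw + 2*Kz) * (x ^ (κ+2) * ‖f x‖) := by
      have t1 : ‖g x * u x‖ ≤ 4*LN*Kw * (x ^ (κ+2) * ‖f x‖) := by
        rw [norm_mul]
        calc ‖g x‖ * ‖u x‖ ≤ (2 * LN * x ^ (κ+1)) * (Kw * x * (x * ‖f x‖)) :=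
              mul_le_mul bg1 (hub x hx) (norm_nonneg _) (by positivity)
        _ = 2*LN*Kw * x * (x ^ (κ+2) * ‖f x‖) := by rw [hxk2]; ring
        _ ≤ 2*LN*Kw * 1 * (x ^ (κ+2) * ‖f x‖) := by
            apply mul_le_mul_of_nonneg_right _ (mul_nonneg hκx2.le (norm_nonneg _))
            exact mul_le_mul_of_nonneg_left hx1 (by positivity)
        _ ≤ 4*LN*Kw * (x ^ (κ+2) * ‖f x‖) := by
            apply mul_le_mul_of_nonneg_right _ (mul_nonneg hκx2.le (norm_nonneg _))
            nlinarith [mul_nonneg hLpos.le hKwnn]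
      have t2 : ‖z x‖ ≤ 2*Kz * (x ^ (κ+2) * ‖f x‖) := by
        calc ‖z x‖ ≤ Kz * x ^ (2*κ+2) := hzb x hx
        _ = Kz * (x ^ (κ+2) * x ^ κ) := by
            rw [← Real.rpow_add hx.1]; congr 1; ring
        _ ≤ Kz * (x ^ (κ+2) * (2 * ‖f x‖)) := by
            apply mul_le_mul_of_nonneg_left _ hKznn
            exact mul_le_mul_of_nonneg_left bf2 hκx2.le
        _ = 2*Kz * (x ^ (κ+2) * ‖f x‖) := by ring
      calc ‖g x * u x + z x‖ ≤ ‖g x * u x‖ + ‖z x‖ := norm_add_le _ _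
      _ ≤ 4*LN*Kw * (x ^ (κ+2) * ‖f x‖) + 2*Kz * (x ^ (κ+2) * ‖f x‖) := add_le_add t1 t2
      _ = (4*LN*Kw + 2*Kz) * (x ^ (κ+2) * ‖f x‖) := by ring
    have hvx : ‖v x‖ ≤ (4*LN*Kw + 2*Kz) * x ^ (κ+2) := by
      rw [hv x hxa, norm_mul, norm_div, norm_one, div_mul_eq_mul_div, one_mul,
        div_le_iff₀ hfpos]
      calc ‖g x * u x + z x‖ ≤ (4*LN*Kw + 2*Kz) * (x ^ (κ+2) * ‖f x‖) := hnum
      _ = (4*LN*Kw + 2*Kz) * x ^ (κ+2) * ‖f x‖ := by ring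
    have htarget : LN/2 * x ^ (κ+2) ≤ ‖(x : ℂ) * g x‖ := by
      rw [norm_mul, Complex.norm_real, Real.norm_of_nonneg hx.1.le]
      calc LN/2 * x ^ (κ+2) = x * (LN/2 * x ^ (κ+1)) := by rw [hxk2]; ring
      _ ≤ x * ‖g x‖ := mul_le_mul_of_nonneg_left bg2 hx.1.le
    calc ‖v x‖ ≤ (4*LN*Kw + 2*Kz) * x ^ (κ+2) := hvx
    _ = (4*LN*Kw + 2*Kz) * 2 / LN * (LN/2 * x ^ (κ+2)) := by
        field_simp [ne_of_gt hLpos]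
    _ ≤ (4*LN*Kw + 2*Kz) * 2 / LN * ‖(x : ℂ) * g x‖ := by
        apply mul_le_mul_of_nonneg_left htarget (by positivity)
  refine ⟨huO, hvO, ?_⟩
  ------------------------------------------------------------------
  -- Part 3 : uniqueness
  ------------------------------------------------------------------
  intro u₁ v₁ u₁' v₁' hdu₁ hdv₁ hS1 hS2 hu₁O hv₁O
  have hIoo_sub : Set.Ioo (0:ℝ) a ⊆ Set.Ioc 0 a := Set.Ioo_subset_Ioc_self
  have hIoo_Icc : Set.Ioo (0:ℝ) a ⊆ Set.Icc 0 a := Set.Ioo_subset_Icc_self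
  have haI : a ∈ Set.Ioc (0:ℝ) a := ⟨ha, le_refl a⟩
  have huIcc : Set.uIcc (0:ℝ) a = Set.Icc 0 a := Set.uIcc_of_le ha.le
  have hfc : ContinuousOn f (Set.Ioc 0 a) :=
    fun y hy => ((hf y hy).continuousAt).continuousWithinAt
  have hgc : ContinuousOn g (Set.Ioc 0 a) :=
    fun y hy => ((hg y hy).continuousAt).continuousWithinAt
  have hu₁c : ContinuousOn u₁ (Set.Ioc 0 a) :=
    fun y hy => ((hdu₁ y hy).continuousAt).continuousWithinAt
  have hv₁c : ContinuousOn v₁ (Set.Ioc 0 a) :=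
    fun y hy => ((hdv₁ y hy).continuousAt).continuousWithinAt
  -- continuity of z
  have hPzc : ContinuousOn (fun y => ∫ t in (0:ℝ)..y, (h₁ t * f t + h₂ t * g t))
      (Set.uIcc 0 a) :=
    intervalIntegral.continuousOn_primitive_interval' (hint1 a haI) Set.left_mem_uIcc
  have hzc : ContinuousOn z (Set.Ioc 0 a) := by
    apply ContinuousOn.congr (hPzc.mono ?_) (fun x hx => hz x hx)
    rw [huIcc]; exact Set.Ioc_subset_Icc_self
  -- derivative of z
  have hw1c : ContinuousOn (fun t => h₁ t * f t + h₂ t * g t) (Set.Ioo 0 a) :=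
    ((hh₁.mono hIoo_Icc).mul (hfc.mono hIoo_sub)).add
      ((hh₂.mono hIoo_Icc).mul (hgc.mono hIoo_sub))
  have hzd : ∀ x ∈ Set.Ioo (0:ℝ) a, HasDerivAt z (h₁ x * f x + h₂ x * g x) x := by
    intro x hx
    have hxa : x ∈ Set.Ioc (0:ℝ) a := hIoo_sub hx
    have hP : HasDerivAt (fun y => ∫ t in (0:ℝ)..y, (h₁ t * f t + h₂ t * g t))
        (h₁ x * f x + h₂ x * g x) x :=
      intervalIntegral.integral_hasDerivAt_right (hint1 x hxa)
        (ContinuousOn.stronglyMeasurableAtFilter isOpen_Ioo hw1c x hx)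
        (hw1c.continuousAt (isOpen_Ioo.mem_nhds hx))
    apply hP.congr_of_eventuallyEq
    filter_upwards [isOpen_Ioo.mem_nhds hx] with y hy
    exact hz y (hIoo_sub hy)
  -- A := f v₁ - g u₁ - z  vanishes
  have hAd : ∀ x ∈ Set.Ioo (0:ℝ) a,
      HasDerivAt (fun y => f y * v₁ y - g y * u₁ y - z y) 0 x := by
    intro x hx
    have hxa : x ∈ Set.Ioc (0:ℝ) a := hIoo_sub hx
    have hD : HasDerivAt (fun y => f y * v₁ y - g y * u₁ y - z y)
        (f' x * v₁ x + f x * v₁' x - (g' x * u₁ x + g x * u₁' x)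
          - (h₁ x * f x + h₂ x * g x)) x :=
      (((hf x hxa).mul (hdv₁ x hxa)).sub ((hg x hxa).mul (hdu₁ x hxa))).sub (hzd x hx)
    have h0 : f' x * v₁ x + f x * v₁' x - (g' x * u₁ x + g x * u₁' x)
        - (h₁ x * f x + h₂ x * g x) = 0 := by
      linear_combination (-(v₁ x)) * hsys2 x hxa + f x * hS1 x hxa
        + (-(u₁ x)) * hsys1 x hxa + g x * hS2 x hxa
    rwa [h0] at hD
  -- limits of u₁, v₁
  obtain ⟨Cu, hCunn, hCu'⟩ := bigO_extract hu₁O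
  obtain ⟨Cv, hCvnn, hCv'⟩ := bigO_extract hv₁O
  have hCu : ∀ᶠ x in 𝓝[>] (0:ℝ), ‖u₁ x‖ ≤ Cu * (x * ‖f x‖) := by
    filter_upwards [hCu', self_mem_nhdsWithin] with x hx hx0
    rwa [norm_mul, Complex.norm_real, Real.norm_of_nonneg (le_of_lt hx0)] at hx
  have hCv : ∀ᶠ x in 𝓝[>] (0:ℝ), ‖v₁ x‖ ≤ Cv * (x * ‖g x‖) := by
    filter_upwards [hCv', self_mem_nhdsWithin] with x hx hx0
    rwa [norm_mul, Complex.norm_real, Real.norm_of_nonneg (le_of_lt hx0)] at hx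
  have hlin : ∀ C : ℝ, Tendsto (fun x : ℝ => C * x) (𝓝[>] (0:ℝ)) (𝓝 0) := by
    intro C
    have h : Tendsto (fun x : ℝ => C * x) (𝓝 (0:ℝ)) (𝓝 (C * 0)) :=
      (continuous_const.mul continuous_id).tendsto 0
    rw [mul_zero] at h
    exact h.mono_left nhdsWithin_le_nhds
  have hAlim : Tendsto (fun y => f y * v₁ y - g y * u₁ y - z y) (𝓝[>] (0:ℝ)) (𝓝 0) := by
    apply squeeze_zero_norm' (a := fun x : ℝ => (8*LN*Cv + 8*LN*Cu + Kz) * x) _ (hlin _)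
    filter_upwards [hCu, hCv,
      Ioc_mem_nhdsGT_of_mem (⟨le_refl (0:ℝ), hδ0⟩ : (0:ℝ) ∈ Set.Ico (0:ℝ) δ)]
      with x bu bv hx
    obtain ⟨b1, b2, ⟨bf1, bf2⟩, bg1, bg2⟩ := good x hx
    have hx1 : x ≤ 1 := le_trans hx.2 hδ1
    have hκ1 : x ^ κ ≤ 1 := Real.rpow_le_one hx.1.le hx1 (by linarith)
    have hκ11 : x ^ (κ+1:ℝ) ≤ 1 := Real.rpow_le_one hx.1.le hx1 (by linarith)
    have hf2 : ‖f x‖ ≤ 2 := le_trans bf1 (by nlinarith)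
    have hg2 : ‖g x‖ ≤ 2 * LN := le_trans bg1 (by nlinarith)
    have hz1 : ‖z x‖ ≤ Kz * x := by
      calc ‖z x‖ ≤ Kz * x ^ (2*κ+2) := hzb x hx
      _ ≤ Kz * x ^ (1:ℝ) := by
          apply mul_le_mul_of_nonneg_left _ hKznn
          exact Real.rpow_le_rpow_of_exponent_ge hx.1 hx1 (by linarith)
      _ = Kz * x := by rw [Real.rpow_one]
    calc ‖f x * v₁ x - g x * u₁ x - z x‖
        ≤ ‖f x * v₁ x - g x * u₁ x‖ + ‖z x‖ := norm_sub_le _ _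
    _ ≤ (‖f x * v₁ x‖ + ‖g x * u₁ x‖) + ‖z x‖ := by
        exact add_le_add_left (norm_sub_le _ _) _
    _ = (‖f x‖ * ‖v₁ x‖ + ‖g x‖ * ‖u₁ x‖) + ‖z x‖ := by rw [norm_mul, norm_mul]
    _ ≤ (2 * (Cv * (x * (2*LN))) + 2*LN * (Cu * (x * 2))) + Kz * x := by
        apply add_le_add _ hz1
        apply add_le_add
        · apply mul_le_mul hf2 (le_trans bv _) (norm_nonneg _) (by norm_num)
          apply mul_le_mul_of_nonneg_left _ hCvnn
          exact mul_le_mul_of_nonneg_left hg2 hx.1.le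
        · apply mul_le_mul hg2 (le_trans bu _) (norm_nonneg _) (by positivity)
          apply mul_le_mul_of_nonneg_left _ hCunn
          exact mul_le_mul_of_nonneg_left hf2 hx.1.le
    _ ≤ (8*LN*Cv + 8*LN*Cu + Kz) * x := by
        nlinarith [hx.1.le, mul_nonneg hLpos.le hCvnn, mul_nonneg hLpos.le hCunn, mul_nonneg hKznn hx.1.le]
  have hAc : ContinuousOn (fun y => f y * v₁ y - g y * u₁ y - z y) (Set.Ioc 0 a) :=
    ((hfc.mul hv₁c).sub (hgc.mul hu₁c)).sub hzc
  have hA0 : ∀ x ∈ Set.Ioc (0:ℝ) a, f x * v₁ x - g x * u₁ x - z x = 0 :=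
    vanish_aux hAd hAc hAlim
  have key : ∀ x ∈ Set.Ioc (0:ℝ) a, f x * v₁ x - g x * u₁ x = z x := by
    intro x hx
    have := hA0 x hx
    linear_combination this
  -- φ := u₁ / f - I  vanishes
  have hwc : ContinuousOn (fun t => -(h₂ t / f t) + p₂ t / f t ^ 2 * z t) (Set.Ioo 0 a) := by
    apply ContinuousOn.add
    · exact ((hh₂.mono hIoo_Icc).div (hfc.mono hIoo_sub)
        (fun y hy => hfne y (hIoo_sub hy))).neg
    · exact ((hp₂.mono hIoo_Icc).div ((hfc.mono hIoo_sub).pow 2)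
        (fun y hy => pow_ne_zero 2 (hfne y (hIoo_sub hy)))).mul (hzc.mono hIoo_sub)
  have hIc : ContinuousOn (fun y => ∫ t in (0:ℝ)..y, (-(h₂ t / f t) + p₂ t / f t ^ 2 * z t))
      (Set.uIcc 0 a) :=
    intervalIntegral.continuousOn_primitive_interval' (hint2 a haI) Set.left_mem_uIcc
  have hId : ∀ x ∈ Set.Ioo (0:ℝ) a,
      HasDerivAt (fun y => ∫ t in (0:ℝ)..y, (-(h₂ t / f t) + p₂ t / f t ^ 2 * z t))
        (-(h₂ x / f x) + p₂ x / f x ^ 2 * z x) x := by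
    intro x hx
    have hxa : x ∈ Set.Ioc (0:ℝ) a := hIoo_sub hx
    exact intervalIntegral.integral_hasDerivAt_right (hint2 x hxa)
      (ContinuousOn.stronglyMeasurableAtFilter isOpen_Ioo hwc x hx)
      (hwc.continuousAt (isOpen_Ioo.mem_nhds hx))
  have hφd : ∀ x ∈ Set.Ioo (0:ℝ) a,
      HasDerivAt (fun y => u₁ y / f y
        - ∫ t in (0:ℝ)..y, (-(h₂ t / f t) + p₂ t / f t ^ 2 * z t)) 0 x := by
    intro x hx
    have hxa : x ∈ Set.Ioc (0:ℝ) a := hIoo_sub hx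
    have hD : HasDerivAt (fun y => u₁ y / f y
        - ∫ t in (0:ℝ)..y, (-(h₂ t / f t) + p₂ t / f t ^ 2 * z t))
        ((u₁' x * f x - u₁ x * f' x) / f x ^ 2
          - (-(h₂ x / f x) + p₂ x / f x ^ 2 * z x)) x :=
      ((hdu₁ x hxa).div (hf x hxa) (hfne x hxa)).sub (hId x hx)
    have h0 : (u₁' x * f x - u₁ x * f' x) / f x ^ 2
        - (-(h₂ x / f x) + p₂ x / f x ^ 2 * z x) = 0 := by
      have hfx : f x ≠ 0 := hfne x hxa
      have hnum : u₁' x * f x - u₁ x * f' x = p₂ x * z x - h₂ x * f x := by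
        linear_combination (-(f x)) * hS2 x hxa + u₁ x * hsys2 x hxa + p₂ x * key x hxa
      rw [hnum, sub_eq_zero, eq_comm, neg_add_eq_sub, div_mul_eq_mul_div]
      field_simp
    rwa [h0] at hD
  have hφlim : Tendsto (fun y => u₁ y / f y
      - ∫ t in (0:ℝ)..y, (-(h₂ t / f t) + p₂ t / f t ^ 2 * z t)) (𝓝[>] (0:ℝ)) (𝓝 0) := by
    apply squeeze_zero_norm' (a := fun x : ℝ => (Cu + Kw) * x) _ (hlin _)
    filter_upwards [hCu,
      Ioc_mem_nhdsGT_of_mem (⟨le_refl (0:ℝ), hδ0⟩ : (0:ℝ) ∈ Set.Ico (0:ℝ) δ)]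
      with x bu hx
    have hxa : x ∈ Set.Ioc (0:ℝ) a := ⟨hx.1, le_trans hx.2 hδa⟩
    have hx1 : x ≤ 1 := le_trans hx.2 hδ1
    have hfpos : (0:ℝ) < ‖f x‖ := norm_pos_iff.2 (hfne x hxa)
    have e1 : ‖u₁ x / f x‖ ≤ Cu * x := by
      rw [norm_div, div_le_iff₀ hfpos]
      calc ‖u₁ x‖ ≤ Cu * (x * ‖f x‖) := bu
      _ = Cu * x * ‖f x‖ := by ring
    have e2 : ‖∫ t in (0:ℝ)..x, (-(h₂ t / f t) + p₂ t / f t ^ 2 * z t)‖ ≤ Kw * x := by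
      calc ‖∫ t in (0:ℝ)..x, (-(h₂ t / f t) + p₂ t / f t ^ 2 * z t)‖ ≤ Kw * x * x :=
            hIb x hx
      _ ≤ Kw * x * 1 := by
          apply mul_le_mul_of_nonneg_left hx1 (mul_nonneg hKwnn hx.1.le)
      _ = Kw * x := by ring
    calc ‖u₁ x / f x - ∫ t in (0:ℝ)..x, (-(h₂ t / f t) + p₂ t / f t ^ 2 * z t)‖
        ≤ ‖u₁ x / f x‖ + ‖∫ t in (0:ℝ)..x, (-(h₂ t / f t) + p₂ t / f t ^ 2 * z t)‖ :=
          norm_sub_le _ _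
    _ ≤ Cu * x + Kw * x := add_le_add e1 e2
    _ = (Cu + Kw) * x := by ring
  have hφc : ContinuousOn (fun y => u₁ y / f y
      - ∫ t in (0:ℝ)..y, (-(h₂ t / f t) + p₂ t / f t ^ 2 * z t)) (Set.Ioc 0 a) := by
    apply ContinuousOn.sub (hu₁c.div hfc hfne)
    apply hIc.mono
    rw [huIcc]; exact Set.Ioc_subset_Icc_self
  have hφ0 := vanish_aux hφd hφc hφlim
  -- conclusion
  intro x hx
  have hfx : f x ≠ 0 := hfne x hx
  have hu₁x : u₁ x = u x := by
    have e := hφ0 x hx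
    have e' : u₁ x / f x = ∫ t in (0:ℝ)..x, (-(h₂ t / f t) + p₂ t / f t ^ 2 * z t) := by
      linear_combination e
    rw [div_eq_iff hfx] at e'
    rw [hu x hx, e']
    ring
  refine ⟨hu₁x, ?_⟩
  have hk := key x hx
  have hvx : f x * v x = g x * u x + z x := by
    rw [hv x hx]
    field_simp
  apply mul_left_cancel₀ hfx
  rw [hvx, ← hu₁x]
  linear_combination hk
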